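/- arXiv:1712.05047 — 3 statements merged into one kernel-verified Lean document; each statement's English description precedes it below -/
import Mathlib

section
/- Let K be a field of characteristic 2 and let E be the elliptic curve over K given by y² + xy = x³ + a₂x² + a₆ with a₂, a₆ ∈ K and a₆ ≠ 0. Suppose there exists β ∈ K with a₆ = β². Then a point P = (x₀, y₀) ∈ E(K) is divisible by 2 in E(K) if and only if the following three conditions hold: (i) there exists r ∈ K with r² = x₀; (ii) there exists l ∈ K with l² + l = x₀ + a₂; (iii) if x₀ = 0, then there exists δ ∈ K with δ⁴ = a₆. -/
open WeierstrassCurve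

private lemma some_congr' {F : Type*} [CommRing F] {W : Affine F} {x₁ y₁ x₂ y₂ : F}
    {h₁ : W.Nonsingular x₁ y₁} {h₂ : W.Nonsingular x₂ y₂} (hx : x₁ = x₂) (hy : y₁ = y₂) :
    Affine.Point.some x₁ y₁ h₁ = Affine.Point.some x₂ y₂ h₂ := by subst hx; subst hy; rfl

open Classical in
/-- divisibility by 2 on the ordinary elliptic curve
`y² + xy = x³ + a₂x² + a₆` over a field of characteristic 2, when `a₆` is a square. -/
theorem divisible_by_two_char_two {K : Type*} [Field K] [CharP K 2]
    (a₂ a₆ : K) (ha₆ : a₆ ≠ 0) (β : K) (hβ : a₆ = β ^ 2)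
    (x₀ y₀ : K)
    (hP : (⟨1, a₂, 0, 0, a₆⟩ : WeierstrassCurve K).toAffine.Nonsingular x₀ y₀) :
    (∃ Q : (⟨1, a₂, 0, 0, a₆⟩ : WeierstrassCurve K).toAffine.Point,
        2 • Q = Affine.Point.some x₀ y₀ hP) ↔
    ((∃ r : K, r ^ 2 = x₀) ∧ (∃ l : K, l ^ 2 + l = x₀ + a₂) ∧
      (x₀ = 0 → ∃ δ : K, δ ^ 4 = a₆)) := by
  have h2 : (2:K) = 0 := by exact_mod_cast CharP.cast_eq_zero K 2
  let W := (⟨1, a₂, 0, 0, a₆⟩ : WeierstrassCurve K).toAffine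
  have hW : W = (⟨1, a₂, 0, 0, a₆⟩ : WeierstrassCurve K).toAffine := rfl
  have ha1 : W.a₁ = 1 := rfl
  have ha2 : W.a₂ = a₂ := rfl
  have ha3 : W.a₃ = 0 := rfl
  have ha4 : W.a₄ = 0 := rfl
  have ha6 : W.a₆ = a₆ := rfl
  have hΔ : W.Δ ≠ 0 := by
    have : W.Δ = a₆ := by
      show ((⟨1, a₂, 0, 0, a₆⟩ : WeierstrassCurve K)).Δ = a₆
      simp only [WeierstrassCurve.Δ, b₂, b₄, b₆, b₈]
      ring_nf
      linear_combination (a₂ - a₂*a₆*10 + a₂^2*2 - a₂^2*a₆*24 - a₂^3*a₆*32 - a₆*7 - a₆^2*224 - a₂ + a₂*a₆*4 - a₂^2*2 + a₆*6 + a₆^2*8) * h2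
    rw [this]; exact ha₆
  have hneg : ∀ x y : K, W.negY x y = y + x := by
    intro x y
    rw [Affine.negY, ha1, ha3]
    linear_combination (-y - x) * h2
  have heq : ∀ x y : K, W.Equation x y ↔ y^2 + x*y = x^3 + a₂*x^2 + a₆ := by
    intro x y
    rw [Affine.equation_iff, ha1, ha2, ha3, ha4, ha6]
    constructor <;> intro h <;> linear_combination h
  have hyne : ∀ x y : K, x ≠ 0 → y ≠ W.negY x y := by
    intro x y hx0 hcon
    rw [hneg] at hcon
    exact hx0 (left_eq_add.mp hcon)
  have slope_mul : ∀ x y : K, x ≠ 0 → (hy : y ≠ W.negY x y) → W.slope x x y y * x = x^2 + y := by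
    intro x y hx0 hy
    rw [Affine.slope_of_Y_ne rfl hy, hneg x y, ha1, ha2, ha4]
    have hden : y - (y + x) = -x := by ring
    rw [hden, div_mul_eq_mul_div, div_eq_iff (neg_ne_zero.mpr hx0)]
    linear_combination (2*x^3 + a₂*x^2) * h2
  have addX_eq : ∀ x l : K, W.addX x x l = l^2 + l - a₂ - x - x := by
    intro x l
    rw [Affine.addX, ha1, ha2]; ring
  -- curve equation for P
  have hPe : y₀^2 + x₀*y₀ = x₀^3 + a₂*x₀^2 + a₆ := (heq x₀ y₀).mp hP.1
  constructor
  · rintro ⟨Q, hQ⟩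
    rcases Q with _ | @⟨x, y, h⟩
    · rw [← Affine.Point.zero_def, smul_zero] at hQ
      exact (Affine.Point.some_ne_zero hP hQ.symm).elim
    · by_cases hy : y = W.negY x y
      · rw [two_smul, Affine.Point.add_self_of_Y_eq hy] at hQ
        exact (Affine.Point.some_ne_zero hP hQ.symm).elim
      · rw [two_smul, Affine.Point.add_self_of_Y_ne hy] at hQ
        have hx0 : x ≠ 0 := by
          intro h0
          exact hy (by rw [hneg, h0, add_zero])
        injection hQ with hx hy'
        set l := W.slope x x y y with hl
        have hlx : l * x = x^2 + y := slope_mul x y hx0 hy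
        rw [addX_eq] at hx
        have heqQ : y^2 + x*y = x^3 + a₂*x^2 + a₆ := (heq x y).mp h.1
        have key : x₀ * x^2 = x^4 + a₆ := by
          linear_combination (-(x^2)) * hx + (l*x + x^2 + y + x) * hlx + heqQ + x^2*y*h2
        refine ⟨⟨(x^2 + β)/x, ?_⟩, ⟨l, ?_⟩, fun h0 => ⟨x, ?_⟩⟩
        · rw [div_pow, div_eq_iff (pow_ne_zero 2 hx0)]
          linear_combination key - hβ + (x^2*β - x^2*x₀ + x^4 + a₆)*h2
        · linear_combination hx + x*h2
        · linear_combination (-1)*key + x^2*h0 - a₆*h2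
  · rintro ⟨⟨r, hr⟩, ⟨l, hl⟩, h0⟩
    -- construct the x-coordinate
    obtain ⟨x, hx0, hxx⟩ : ∃ x : K, x ≠ 0 ∧ x₀*x^2 + x^4 = a₆ := by
      by_cases hx₀ : x₀ = 0
      · obtain ⟨δ, hδ⟩ := h0 hx₀
        have hδ0 : δ ≠ 0 := by
          intro h; rw [h] at hδ; simp at hδ; exact ha₆ hδ.symm
        exact ⟨δ, hδ0, by linear_combination hδ + δ^2*hx₀⟩
      · have hβ0 : β ≠ 0 := by
          intro h; rw [h] at hβ; simp at hβ; exact ha₆ hβ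
        have hr0 : r ≠ 0 := by
          intro h; rw [h] at hr; simp at hr; exact hx₀ hr.symm
        set x := r*((y₀ + l*x₀ + β)/x₀) with hxdef
        have hq : x^2 + r*x = β := by
          rw [hxdef]
          field_simp
          linear_combination ((y₀+l*x₀+β)^2 + (y₀+l*x₀+β)*x₀)*hr + x₀*hPe + x₀^3*hl + x₀*hβ + x₀*(x₀^3 + a₂*x₀^2 + β^2 + l*y₀*x₀ + β*y₀ + β*l*x₀)*h2
        refine ⟨x, ?_, ?_⟩
        · intro hxz
          rw [hxz] at hq
          simp at hq
          exact hβ0 hq.symm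
        · linear_combination (x^2 - r*x + β)*hq + x^2*hr - hβ + (x₀*x^2 - β*r*x)*h2
    set y := l*x + x^2 with hy_def
    have hQe : W.Equation x y := by
      rw [heq]
      linear_combination x^2*hl + hxx + (l*x^3)*h2
    have hQns : W.Nonsingular x y := (W.equation_iff_nonsingular_of_Δ_ne_zero hΔ).mp hQe
    have hy : y ≠ W.negY x y := hyne x y hx0
    set l' := W.slope x x y y with hl'
    have hlx : l' * x = x^2 + y := slope_mul x y hx0 hy
    have hsl : l' = l := by
      have hc : l' * x = l * x := by linear_combination hlx + x^2*h2
      exact mul_right_cancel₀ hx0 hc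
    have hX3 : W.addX x x l' = x₀ := by
      rw [addX_eq]
      linear_combination (l'+l+1)*hsl + hl + (-x)*h2
    have h3 := Affine.nonsingular_add hQns hQns (fun h => hy h.2)
    have hY3 := Affine.Y_eq_of_X_eq h3.1 hP.1 hX3
    rcases hY3 with hY3 | hY3
    · refine ⟨Affine.Point.some x y hQns, ?_⟩
      rw [two_smul, Affine.Point.add_self_of_Y_ne hy]
      exact some_congr' hX3 hY3
    · refine ⟨-(Affine.Point.some x y hQns), ?_⟩
      rw [two_smul, ← neg_add, Affine.Point.add_self_of_Y_ne hy, Affine.Point.neg_some]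
      refine some_congr' hX3 ?_
      rw [hY3, hX3, Affine.negY_negY]
end

section
/- Let K be a field of characteristic 2 and let E be an elliptic curve over K. Then E(K) contains a point of order 4 if and only if there exists a nonzero γ ∈ K such that E is K-isomorphic to the elliptic curve E_{4,γ} : y² + xy = x³ + γ⁴. -/
open WeierstrassCurve

namespace OF4aux

open Classical

variable {F : Type*} [Field F]

/-- x-coordinate map for a variable change. -/
def vcx (C : VariableChange F) (x : F) : F := (↑C.u⁻¹ : F) ^ 2 * (x - C.r)

/-- y-coordinate map for a variable change. -/
def vcy (C : VariableChange F) (x y : F) : F :=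
  (↑C.u⁻¹ : F) ^ 3 * (y - C.s * (x - C.r) - C.t)

variable (W : WeierstrassCurve F) (C : VariableChange F)

lemma vcx_inj {x x' : F} (h : vcx C x = vcx C x') : x = x' := by
  have := mul_left_cancel₀ (pow_ne_zero 2 C.u⁻¹.ne_zero) h
  exact sub_left_injective this

lemma vcy_inj {x x' y y' : F} (hx : x = x') (h : vcy C x y = vcy C x' y') : y = y' := by
  subst hx
  have := mul_left_cancel₀ (pow_ne_zero 3 C.u⁻¹.ne_zero) h
  exact sub_left_injective (sub_left_injective this)

lemma vc_negY (x y : F) :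
    (C • W).toAffine.negY (vcx C x) (vcy C x y)
      = vcy C x (W.toAffine.negY x y) := by
  simp only [Affine.negY, vcx, vcy, variableChange_a₁, variableChange_a₃]
  ring

lemma vc_polynomial (x y : F) :
    (C • W).toAffine.polynomial.evalEval (vcx C x) (vcy C x y)
      = (↑C.u⁻¹ : F) ^ 6 * W.toAffine.polynomial.evalEval x y := by
  simp only [Affine.evalEval_polynomial, vcx, vcy, variableChange_a₁, variableChange_a₂,
    variableChange_a₃, variableChange_a₄, variableChange_a₆]
  ring

lemma vc_polynomialX (x y : F) :
    (C • W).toAffine.polynomialX.evalEval (vcx C x) (vcy C x y)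
      = (↑C.u⁻¹ : F) ^ 4 * (W.toAffine.polynomialX.evalEval x y
          + C.s * W.toAffine.polynomialY.evalEval x y) := by
  simp only [Affine.evalEval_polynomialX, Affine.evalEval_polynomialY, vcx, vcy,
    variableChange_a₁, variableChange_a₂, variableChange_a₃, variableChange_a₄]
  ring

lemma vc_polynomialY (x y : F) :
    (C • W).toAffine.polynomialY.evalEval (vcx C x) (vcy C x y)
      = (↑C.u⁻¹ : F) ^ 3 * W.toAffine.polynomialY.evalEval x y := by
  simp only [Affine.evalEval_polynomialY, vcx, vcy, variableChange_a₁, variableChange_a₃]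
  ring

lemma vc_equation {x y : F} (h : W.toAffine.Equation x y) :
    (C • W).toAffine.Equation (vcx C x) (vcy C x y) := by
  rw [Affine.Equation, vc_polynomial, h, mul_zero]

lemma vc_nonsingular {x y : F} (h : W.toAffine.Nonsingular x y) :
    (C • W).toAffine.Nonsingular (vcx C x) (vcy C x y) := by
  have hu : (↑C.u⁻¹ : F) ≠ 0 := C.u⁻¹.ne_zero
  obtain ⟨he, hd⟩ := h
  refine ⟨vc_equation W C he, ?_⟩
  rw [vc_polynomialX, vc_polynomialY]
  rcases hd with hX | hY
  · by_cases hY0 : W.toAffine.polynomialY.evalEval x y = 0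
    · exact Or.inl <| by
        rw [hY0, mul_zero, add_zero]; exact mul_ne_zero (pow_ne_zero _ hu) hX
    · exact Or.inr <| mul_ne_zero (pow_ne_zero _ hu) hY0
  · exact Or.inr <| mul_ne_zero (pow_ne_zero _ hu) hY

lemma vc_addX (x₁ x₂ l : F) :
    (C • W).toAffine.addX (vcx C x₁) (vcx C x₂) ((↑C.u⁻¹ : F) * (l - C.s))
      = vcx C (W.toAffine.addX x₁ x₂ l) := by
  simp only [Affine.addX, vcx, variableChange_a₁, variableChange_a₂]
  ring

lemma vc_addY (x₁ x₂ y₁ l : F) :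
    (C • W).toAffine.addY (vcx C x₁) (vcx C x₂) (vcy C x₁ y₁)
        ((↑C.u⁻¹ : F) * (l - C.s))
      = vcy C (W.toAffine.addX x₁ x₂ l) (W.toAffine.addY x₁ x₂ y₁ l) := by
  simp only [Affine.addY, Affine.negAddY, Affine.addX, Affine.negY, vcx, vcy,
    variableChange_a₁, variableChange_a₂, variableChange_a₃]
  ring

lemma vc_slope {x₁ x₂ y₁ y₂ : F} (h₁ : W.toAffine.Equation x₁ y₁)
    (h₂ : W.toAffine.Equation x₂ y₂)
    (hxy : x₁ = x₂ → y₁ ≠ W.toAffine.negY x₂ y₂) :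
    (C • W).toAffine.slope (vcx C x₁) (vcx C x₂) (vcy C x₁ y₁) (vcy C x₂ y₂)
      = (↑C.u⁻¹ : F) * (W.toAffine.slope x₁ x₂ y₁ y₂ - C.s) := by
  have hu : (↑C.u⁻¹ : F) ≠ 0 := C.u⁻¹.ne_zero
  by_cases hx : x₁ = x₂
  · have hy : y₁ ≠ W.toAffine.negY x₂ y₂ := hxy hx
    have hy' : y₁ = y₂ := Affine.Y_eq_of_Y_ne h₁ h₂ hx hy
    subst hx; subst hy'
    have hyy : y₁ ≠ W.toAffine.negY x₁ y₁ := hy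
    have hD : y₁ - W.toAffine.negY x₁ y₁ ≠ 0 := sub_ne_zero_of_ne hyy
    have hy2 : vcy C x₁ y₁ ≠ (C • W).toAffine.negY (vcx C x₁) (vcy C x₁ y₁) := by
      rw [vc_negY]
      exact fun hcon => hyy (vcy_inj C rfl hcon)
    rw [Affine.slope_of_Y_ne rfl hy2, Affine.slope_of_Y_ne rfl hyy, vc_negY]
    have hN' : 3 * vcx C x₁ ^ 2 + 2 * (C • W).toAffine.a₂ * vcx C x₁
          + (C • W).toAffine.a₄
          - (C • W).toAffine.a₁ * vcy C x₁ y₁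
        = (↑C.u⁻¹ : F) ^ 3 * ((↑C.u⁻¹ : F) *
            ((3 * x₁ ^ 2 + 2 * W.toAffine.a₂ * x₁ + W.toAffine.a₄ - W.toAffine.a₁ * y₁)
              - C.s * (y₁ - W.toAffine.negY x₁ y₁))) := by
      simp only [vcx, vcy, Affine.negY, variableChange_a₁, variableChange_a₂, variableChange_a₄]
      ring
    have hD' : vcy C x₁ y₁ - vcy C x₁ (W.toAffine.negY x₁ y₁)
        = (↑C.u⁻¹ : F) ^ 3 * (y₁ - W.toAffine.negY x₁ y₁) := by
      simp only [vcy, Affine.negY]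
      ring
    rw [hN', hD', mul_div_mul_left _ _ (pow_ne_zero 3 hu), mul_div_assoc, sub_div,
      mul_div_cancel_right₀ _ hD]
  · have hx' : vcx C x₁ ≠ vcx C x₂ := fun hcon => hx (vcx_inj C hcon)
    rw [Affine.slope_of_X_ne hx, Affine.slope_of_X_ne hx']
    have hD : x₁ - x₂ ≠ 0 := sub_ne_zero_of_ne hx
    have hN' : vcy C x₁ y₁ - vcy C x₂ y₂
        = (↑C.u⁻¹ : F) ^ 2 * ((↑C.u⁻¹ : F) * ((y₁ - y₂) - C.s * (x₁ - x₂))) := by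
      simp only [vcy]; ring
    have hD' : vcx C x₁ - vcx C x₂ = (↑C.u⁻¹ : F) ^ 2 * (x₁ - x₂) := by
      simp only [vcx]; ring
    rw [hN', hD', mul_div_mul_left _ _ (pow_ne_zero 2 hu), mul_div_assoc, sub_div,
      mul_div_cancel_right₀ _ hD]

lemma some_eq_some {W' : WeierstrassCurve F} {x₁ y₁ x₂ y₂ : F}
    {h₁ : W'.toAffine.Nonsingular x₁ y₁} {h₂ : W'.toAffine.Nonsingular x₂ y₂}
    (hx : x₁ = x₂) (hy : y₁ = y₂) :
    Affine.Point.some _ _ h₁ = Affine.Point.some _ _ h₂ := by subst hx; subst hy; rfl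

/-- The point map induced by a variable change. -/
def vcPoint : W.toAffine.Point → (C • W).toAffine.Point
  | .zero => .zero
  | .some _ _ h => .some _ _ (vc_nonsingular W C h)

lemma vcPoint_zero : vcPoint W C 0 = 0 := rfl

lemma vcPoint_some {x y : F} (h : W.toAffine.Nonsingular x y) :
    vcPoint W C (.some _ _ h) = .some _ _ (vc_nonsingular W C h) := rfl

lemma vcPoint_add (P Q : W.toAffine.Point) :
    vcPoint W C (P + Q) = vcPoint W C P + vcPoint W C Q := by
  obtain _ | @⟨x₁, y₁, h₁⟩ := P
  · rw [show Affine.Point.zero = (0 : W.toAffine.Point) from rfl, zero_add, vcPoint_zero,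
      zero_add]
  obtain _ | @⟨x₂, y₂, h₂⟩ := Q
  · rw [show Affine.Point.zero = (0 : W.toAffine.Point) from rfl, add_zero, vcPoint_zero,
      add_zero]
  by_cases hxy : x₁ = x₂ ∧ y₁ = W.toAffine.negY x₂ y₂
  · have hx' : vcx C x₁ = vcx C x₂ := by rw [hxy.1]
    have hy' : vcy C x₁ y₁ = (C • W).toAffine.negY (vcx C x₂) (vcy C x₂ y₂) := by
      rw [vc_negY, hxy.1, hxy.2]
    rw [Affine.Point.add_of_Y_eq hxy.1 hxy.2, vcPoint_some, vcPoint_some,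
      Affine.Point.add_of_Y_eq hx' hy', vcPoint_zero]
  · have hxy' : x₁ = x₂ → y₁ ≠ W.toAffine.negY x₂ y₂ := fun hx hy => hxy ⟨hx, hy⟩
    have hxy'' : vcx C x₁ = vcx C x₂ →
        vcy C x₁ y₁ ≠ (C • W).toAffine.negY (vcx C x₂) (vcy C x₂ y₂) := by
      intro hx hy
      have hx2 := vcx_inj C hx
      rw [vc_negY] at hy
      rw [hx2] at hy; exact hxy' hx2 (vcy_inj C rfl hy)
    rw [Affine.Point.add_some hxy, vcPoint_some, vcPoint_some, vcPoint_some,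
      Affine.Point.add_some (fun h => hxy'' h.1 h.2)]
    exact some_eq_some
      (by rw [vc_slope W C h₁.1 h₂.1 hxy', vc_addX])
      (by rw [vc_slope W C h₁.1 h₂.1 hxy', vc_addY])

/-- The group homomorphism on points induced by a variable change. -/
noncomputable def vcHom : W.toAffine.Point →+ (C • W).toAffine.Point where
  toFun := vcPoint W C
  map_zero' := rfl
  map_add' := vcPoint_add W C

lemma vcHom_injective : Function.Injective (vcHom W C) := by
  rintro (_ | @⟨x₁, y₁, h₁⟩) (_ | @⟨x₂, y₂, h₂⟩) h
  · rfl
  · exact absurd h.symm (Affine.Point.some_ne_zero _)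
  · exact absurd h (Affine.Point.some_ne_zero _)
  · have h' : Affine.Point.some _ _ (vc_nonsingular W C h₁) = .some _ _ (vc_nonsingular W C h₂) := h
    injection h' with hx hy
    exact some_eq_some (vcx_inj C hx) (vcy_inj C (vcx_inj C hx) hy)

lemma vcHom_addOrderOf (P : W.toAffine.Point) : addOrderOf (vcHom W C P) = addOrderOf P :=
  addOrderOf_injective (vcHom W C) (vcHom_injective W C) P

/-- Transport of points along an equality of Weierstrass curves. -/
noncomputable def castHom {V W' : WeierstrassCurve F} (h : V = W') :
    V.toAffine.Point →+ W'.toAffine.Point := by subst h; exact AddMonoidHom.id _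

lemma castHom_addOrderOf {V W' : WeierstrassCurve F} (h : V = W') (P : V.toAffine.Point) :
    addOrderOf (castHom h P) = addOrderOf P := by subst h; rfl


section CharTwo

variable {K : Type*} [Field K] [CharP K 2]

/-- On `E_{4,γ}`, the point `(γ, γ²)` has order 4. -/
lemma E4_order_four {γ : K} (hγ : γ ≠ 0) :
    ∃ P : (⟨1, 0, 0, 0, γ ^ 4⟩ : WeierstrassCurve K).toAffine.Point, addOrderOf P = 4 := by
  have h2 : (2 : K) = 0 := by exact_mod_cast CharP.cast_eq_zero K 2
  set W₄ : WeierstrassCurve K := ⟨1, 0, 0, 0, γ ^ 4⟩ with hW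
  have ha₁ : W₄.toAffine.a₁ = 1 := rfl
  have ha₂ : W₄.toAffine.a₂ = 0 := rfl
  have ha₃ : W₄.toAffine.a₃ = 0 := rfl
  have ha₄ : W₄.toAffine.a₄ = 0 := rfl
  have ha₆ : W₄.toAffine.a₆ = γ ^ 4 := rfl
  have hy1 : (γ ^ 2 : K) ≠ W₄.toAffine.negY γ (γ ^ 2) := by
    rw [Affine.negY, ha₁, ha₃]
    intro hcon
    apply hγ
    linear_combination hcon - γ ^ 2 * h2
  have hPns : W₄.toAffine.Nonsingular γ (γ ^ 2) := by
    rw [Affine.nonsingular_iff, Affine.equation_iff, ha₁, ha₂, ha₃, ha₄, ha₆]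
    refine ⟨by ring, Or.inr ?_⟩
    intro hcon
    apply hγ
    linear_combination hcon - γ ^ 2 * h2
  have hQns : W₄.toAffine.Nonsingular 0 (γ ^ 2) := by
    rw [Affine.nonsingular_iff, Affine.equation_iff, ha₁, ha₂, ha₃, ha₄, ha₆]
    refine ⟨by ring, Or.inl ?_⟩
    intro hcon
    apply hγ
    have : γ ^ 2 = 0 := by linear_combination hcon
    exact pow_eq_zero_iff (n := 2) (by norm_num) |>.mp this
  have hl : W₄.toAffine.slope γ γ (γ ^ 2) (γ ^ 2) = 0 := by
    rw [Affine.slope_of_Y_ne rfl hy1, ha₁, ha₂, ha₄]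
    have : 3 * γ ^ 2 + 2 * 0 * γ + 0 - 1 * γ ^ 2 = 0 := by linear_combination γ ^ 2 * h2
    rw [this, zero_div]
  have hadd : Affine.Point.some _ _ hPns + Affine.Point.some _ _ hPns = Affine.Point.some _ _ hQns := by
    rw [Affine.Point.add_self_of_Y_ne hy1]
    refine some_eq_some ?_ ?_
    · rw [hl, Affine.addX, ha₁, ha₂]
      linear_combination -γ * h2
    · rw [hl, Affine.addY, Affine.negAddY, Affine.addX, Affine.negY, ha₁, ha₂, ha₃]
      linear_combination (γ - γ ^ 2) * h2
  have hQQ : Affine.Point.some _ _ hQns + Affine.Point.some _ _ hQns = 0 := by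
    apply Affine.Point.add_self_of_Y_eq
    rw [Affine.negY, ha₁, ha₃]
    linear_combination γ ^ 2 * h2
  refine ⟨Affine.Point.some _ _ hPns, ?_⟩
  have h4P : (4 : ℕ) • Affine.Point.some _ _ hPns = 0 := by
    rw [show (4 : ℕ) = 2 + 2 from rfl, add_nsmul, two_nsmul, hadd, hQQ]
  have hdvd : addOrderOf (Affine.Point.some _ _ hPns) ∣ 4 := addOrderOf_dvd_of_nsmul_eq_zero h4P
  have hmem : addOrderOf (Affine.Point.some _ _ hPns) ∈ Nat.divisors 4 :=
    Nat.mem_divisors.mpr ⟨hdvd, by norm_num⟩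
  rw [show Nat.divisors 4 = {1, 2, 4} from by decide] at hmem
  simp only [Finset.mem_insert, Finset.mem_singleton] at hmem
  rcases hmem with h | h | h
  · exact absurd (AddMonoid.addOrderOf_eq_one_iff.mp h) (Affine.Point.some_ne_zero _)
  · exfalso
    have := addOrderOf_nsmul_eq_zero (Affine.Point.some _ _ hPns)
    rw [h, two_nsmul, hadd] at this
    exact Affine.Point.some_ne_zero _ this
  · exact h

/-- Forward direction for a curve already in char-two normal form. -/
lemma forward' {W : WeierstrassCurve K} [W.IsElliptic] [W.IsCharTwoNF]
    (P : W.toAffine.Point) (hP : addOrderOf P = 4) :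
    ∃ γ : K, γ ≠ 0 ∧ ∃ C : VariableChange K,
      C • W = ⟨1, 0, 0, 0, γ ^ 4⟩ := by
  have h2 : (2 : K) = 0 := by exact_mod_cast CharP.cast_eq_zero K 2
  have h4P : (4 : ℕ) • P = 0 := by rw [← hP]; exact addOrderOf_nsmul_eq_zero P
  have h2Pne : P + P ≠ 0 := by
    intro h
    have h2P : (2 : ℕ) • P = 0 := by rwa [two_nsmul]
    have hd := addOrderOf_dvd_of_nsmul_eq_zero h2P
    rw [hP] at hd
    omega
  have hQQ : (P + P) + (P + P) = 0 := by
    rw [show (4 : ℕ) = 2 + 2 from rfl, add_nsmul, two_nsmul] at h4P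
    exact h4P
  have hPne : P ≠ 0 := by
    intro h
    rw [h, addOrderOf_zero] at hP
    omega
  cases ‹W.IsCharTwoNF› with
  | of_j_eq_zero =>
    rename_i instNF
    exfalso
    have ha₁ : W.toAffine.a₁ = 0 := W.a₁_of_isCharTwoJEqZeroNF
    cases hQv : P + P with
    | zero => exact h2Pne hQv
    | some xq yq hq =>
      rw [hQv] at hQQ
      have hyq : yq = W.toAffine.negY xq yq := by
        by_contra hy
        rw [Affine.Point.add_self_of_Y_ne hy] at hQQ
        exact Affine.Point.some_ne_zero _ hQQ
      rw [Affine.negY, ha₁] at hyq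
      have ha₃0 : W.a₃ = 0 := by linear_combination hyq - yq * h2
      have hu := W.isUnit_Δ
      rw [W.Δ_of_isCharTwoJEqZeroNF_of_char_two, ha₃0] at hu
      simp at hu
  | of_j_ne_zero =>
    rename_i instNF
    have ha₁ : W.toAffine.a₁ = 1 := W.a₁_of_isCharTwoJNeZeroNF
    have ha₃ : W.toAffine.a₃ = 0 := W.a₃_of_isCharTwoJNeZeroNF
    have ha₄ : W.toAffine.a₄ = 0 := W.a₄_of_isCharTwoJNeZeroNF
    obtain _ | @⟨x₁, y₁, h₁⟩ := P
    · exact absurd rfl hPne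
    have hy₁ : y₁ ≠ W.toAffine.negY x₁ y₁ := by
      intro hy
      exact h2Pne (Affine.Point.add_self_of_Y_eq hy)
    have hx₁ : x₁ ≠ 0 := by
      intro h0
      apply hy₁
      rw [Affine.negY, ha₁, ha₃, h0]
      linear_combination y₁ * h2
    set l := W.toAffine.slope x₁ x₁ y₁ y₁ with hldef
    rw [Affine.Point.add_self_of_Y_ne hy₁] at hQQ
    have hyQ : W.toAffine.addY x₁ x₁ y₁ l = W.toAffine.negY (W.toAffine.addX x₁ x₁ l)
        (W.toAffine.addY x₁ x₁ y₁ l) := by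
      by_contra hy
      rw [Affine.Point.add_self_of_Y_ne hy] at hQQ
      exact Affine.Point.some_ne_zero _ hQQ
    have hA : W.toAffine.addX x₁ x₁ l = 0 := by
      rw [Affine.negY, ha₁, ha₃] at hyQ
      linear_combination hyQ - W.toAffine.addY x₁ x₁ y₁ l * h2
    have hD : y₁ - W.toAffine.negY x₁ y₁ = x₁ := by
      rw [Affine.negY, ha₁, ha₃]
      linear_combination y₁ * h2
    have hlx : l * x₁ = x₁ ^ 2 + y₁ := by
      rw [hldef, Affine.slope_of_Y_ne rfl hy₁, hD, div_mul_cancel₀ _ hx₁, ha₁, ha₄]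
      linear_combination (x₁ ^ 2 + W.toAffine.a₂ * x₁ - y₁) * h2
    have ha₂ : W.toAffine.a₂ = l ^ 2 + l := by
      rw [Affine.addX, ha₁] at hA
      linear_combination -hA - x₁ * h2
    have heq := (Affine.equation_iff _ _).mp h₁.1
    rw [ha₁, ha₃, ha₄] at heq
    have ha₂x : W.toAffine.a₂ * x₁ ^ 2 = (x₁ ^ 2 + y₁) ^ 2 + (x₁ ^ 2 + y₁) * x₁ := by
      linear_combination x₁ ^ 2 * ha₂ + (l * x₁ + x₁ ^ 2 + y₁ + x₁) * hlx
    have ha₆ : W.toAffine.a₆ = x₁ ^ 4 := by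
      linear_combination -heq - ha₂x - (x₁ ^ 4 + x₁ ^ 3 + x₁ ^ 2 * y₁) * h2
    refine ⟨x₁, hx₁, ⟨1, 0, l, 0⟩, ?_⟩
    ext
    · show (↑(1 : Kˣ)⁻¹ : K) * (W.a₁ + 2 * l) = 1
      rw [inv_one, Units.val_one, ha₁]
      linear_combination l * h2
    · show (↑(1 : Kˣ)⁻¹ : K) ^ 2 * (W.a₂ - l * W.a₁ + 3 * 0 - l ^ 2) = 0
      rw [inv_one, Units.val_one, ha₁, ha₂]
      ring
    · show (↑(1 : Kˣ)⁻¹ : K) ^ 3 * (W.a₃ + 0 * W.a₁ + 2 * 0) = 0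
      rw [inv_one, Units.val_one, ha₃]
      ring
    · show (↑(1 : Kˣ)⁻¹ : K) ^ 4 * (W.a₄ - l * W.a₃ + 2 * 0 * W.a₂ - (0 + 0 * l) * W.a₁
          + 3 * 0 ^ 2 - 2 * l * 0) = 0
      rw [inv_one, Units.val_one, ha₃, ha₄]
      ring
    · show (↑(1 : Kˣ)⁻¹ : K) ^ 6 * (W.a₆ + 0 * W.a₄ + 0 ^ 2 * W.a₂ + 0 ^ 3 - 0 * W.a₃ - 0 ^ 2
          - 0 * 0 * W.a₁) = x₁ ^ 4
      rw [inv_one, Units.val_one, ha₆]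
      ring

end CharTwo

end OF4aux

open Classical in
open OF4aux in
/-- over a field of characteristic 2, an elliptic curve has a `K`-rational
point of order 4 if and only if it is `K`-isomorphic to `E_{4,γ} : y² + xy = x³ + γ⁴`
for some nonzero `γ ∈ K`. -/
theorem order_four_char_two {K : Type*} [Field K] [CharP K 2]
    (E : WeierstrassCurve K) [E.IsElliptic] :
    (∃ P : E.toAffine.Point, addOrderOf P = 4) ↔
    ∃ γ : K, γ ≠ 0 ∧ ∃ C : VariableChange K,
      C • E = ⟨1, 0, 0, 0, γ ^ 4⟩ := by
  classical
  constructor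
  · rintro ⟨P, hP⟩
    haveI := E.toCharTwoNF_spec
    obtain ⟨γ, hγ, C₂, hC₂⟩ := forward' (W := E.toCharTwoNF • E)
      (vcHom E E.toCharTwoNF P) (by rw [vcHom_addOrderOf, hP])
    exact ⟨γ, hγ, C₂ * E.toCharTwoNF, by rw [mul_smul, hC₂]⟩
  · rintro ⟨γ, hγ, C, hC⟩
    obtain ⟨P, hP⟩ := E4_order_four hγ
    have hE : C⁻¹ • (⟨1, 0, 0, 0, γ ^ 4⟩ : WeierstrassCurve K) = E := by
      rw [← hC, inv_smul_smul]
    exact ⟨castHom hE (vcHom _ C⁻¹ P), by rw [castHom_addOrderOf, vcHom_addOrderOf, hP]⟩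
end

section
/- Let K be a field of characteristic 2 and let E be an elliptic curve over K. Then E(K) contains a point of order 8 if and only if there exists t ∈ K with t ∉ {0, 1} such that E is K-isomorphic to the elliptic curve E_{8,t} : y² + xy = x³ + (t/(t² + 1))⁸. -/
open WeierstrassCurve

namespace OrderEightAux

open WeierstrassCurve.Affine WeierstrassCurve.Affine.Point

open scoped Classical

variable {F : Type*} [Field F]

/-- The `x`-coordinate map of an admissible change of variables. -/
def mx (C : VariableChange F) (x : F) : F := (C.u : F) ^ 2 * x + C.r

/-- The `y`-coordinate map of an admissible change of variables. -/
def my (C : VariableChange F) (x y : F) : F :=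
  (C.u : F) ^ 3 * y + (C.u : F) ^ 2 * C.s * x + C.t

lemma mx_injective (C : VariableChange F) {x₁ x₂ : F} (h : mx C x₁ = mx C x₂) : x₁ = x₂ := by
  have hu : (C.u : F) ≠ 0 := C.u.ne_zero
  simp only [mx, add_left_inj] at h
  exact mul_left_cancel₀ (pow_ne_zero 2 hu) h

lemma my_injective (C : VariableChange F) {x y₁ y₂ : F} (h : my C x y₁ = my C x y₂) : y₁ = y₂ := by
  have hu : (C.u : F) ≠ 0 := C.u.ne_zero
  simp only [my, add_left_inj] at h
  exact mul_left_cancel₀ (pow_ne_zero 3 hu) h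

variable (W : WeierstrassCurve F) (C : VariableChange F)

lemma vc_equation (x y : F) :
    (C • W).toAffine.Equation x y ↔ W.toAffine.Equation (mx C x) (my C x y) := by
  have hu : (C.u : F) ≠ 0 := C.u.ne_zero
  have key : (my C x y) ^ 2 + W.a₁ * (mx C x) * (my C x y) + W.a₃ * (my C x y) -
      ((mx C x) ^ 3 + W.a₂ * (mx C x) ^ 2 + W.a₄ * (mx C x) + W.a₆) =
      (C.u : F) ^ 6 * (y ^ 2 + (C • W).a₁ * x * y + (C • W).a₃ * y -
        (x ^ 3 + (C • W).a₂ * x ^ 2 + (C • W).a₄ * x +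
          (C • W).a₆)) := by
    simp only [variableChange_a₁, variableChange_a₂, variableChange_a₃, variableChange_a₄,
      variableChange_a₆, mx, my, Units.val_inv_eq_inv_val]
    field_simp
    ring
  rw [Affine.equation_iff', Affine.equation_iff', key, mul_eq_zero]
  simp [pow_ne_zero 6 hu]

lemma vc_nonsingular (x y : F) :
    (C • W).toAffine.Nonsingular x y ↔ W.toAffine.Nonsingular (mx C x) (my C x y) := by
  have hu : (C.u : F) ≠ 0 := C.u.ne_zero
  have keyY : 2 * (my C x y) + W.a₁ * (mx C x) + W.a₃ =
      (C.u : F) ^ 3 * (2 * y + (C • W).a₁ * x + (C • W).a₃) := by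
    simp only [variableChange_a₁, variableChange_a₃, mx, my, Units.val_inv_eq_inv_val]
    field_simp
    ring
  have keyX : W.a₁ * (my C x y) - (3 * (mx C x) ^ 2 + 2 * W.a₂ * (mx C x) + W.a₄) =
      (C.u : F) ^ 4 * ((C • W).a₁ * y -
        (3 * x ^ 2 + 2 * (C • W).a₂ * x + (C • W).a₄)) -
      C.s * ((C.u : F) ^ 3 * (2 * y + (C • W).a₁ * x + (C • W).a₃)) := by
    simp only [variableChange_a₁, variableChange_a₂, variableChange_a₃, variableChange_a₄,
      mx, my, Units.val_inv_eq_inv_val]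
    field_simp
    ring
  have or_ne : ∀ AA BB : F, ((C.u : F) ^ 4 * AA - C.s * ((C.u : F) ^ 3 * BB) ≠ 0 ∨
      (C.u : F) ^ 3 * BB ≠ 0) ↔ (AA ≠ 0 ∨ BB ≠ 0) := by
    intro AA BB
    constructor
    · rintro (h | h)
      · by_cases hB : BB = 0
        · left
          intro hA
          exact h (by rw [hA, hB]; ring)
        · exact Or.inr hB
      · exact Or.inr fun hB => h (by rw [hB]; ring)
    · rintro (h | h)
      · by_cases hB : BB = 0
        · left
          rw [hB, mul_zero, mul_zero, sub_zero]
          exact mul_ne_zero (pow_ne_zero 4 hu) h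
        · exact Or.inr (mul_ne_zero (pow_ne_zero 3 hu) hB)
      · exact Or.inr (mul_ne_zero (pow_ne_zero 3 hu) h)
  rw [Affine.nonsingular_iff', Affine.nonsingular_iff', ← vc_equation]
  refine and_congr_right fun _ => ?_
  rw [keyX, keyY]
  exact (or_ne _ _).symm

lemma vc_negY (x y : F) :
    W.toAffine.negY (mx C x) (my C x y) = my C x ((C • W).toAffine.negY x y) := by
  have hu : (C.u : F) ≠ 0 := C.u.ne_zero
  simp only [Affine.negY, variableChange_a₁, variableChange_a₃, mx, my, Units.val_inv_eq_inv_val]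
  field_simp
  ring

lemma vc_addX (x₁ x₂ L : F) :
    W.toAffine.addX (mx C x₁) (mx C x₂) ((C.u : F) * L + C.s) =
      mx C ((C • W).toAffine.addX x₁ x₂ L) := by
  have hu : (C.u : F) ≠ 0 := C.u.ne_zero
  simp only [Affine.addX, variableChange_a₁, variableChange_a₂, mx, Units.val_inv_eq_inv_val]
  field_simp
  ring

lemma vc_negAddY (x₁ x₂ y₁ L : F) :
    W.toAffine.negAddY (mx C x₁) (mx C x₂) (my C x₁ y₁) ((C.u : F) * L + C.s) =
      my C ((C • W).toAffine.addX x₁ x₂ L)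
        ((C • W).toAffine.negAddY x₁ x₂ y₁ L) := by
  rw [Affine.negAddY, Affine.negAddY, vc_addX]
  simp only [mx, my]
  ring

lemma vc_addY (x₁ x₂ y₁ L : F) :
    W.toAffine.addY (mx C x₁) (mx C x₂) (my C x₁ y₁) ((C.u : F) * L + C.s) =
      my C ((C • W).toAffine.addX x₁ x₂ L)
        ((C • W).toAffine.addY x₁ x₂ y₁ L) := by
  rw [Affine.addY, vc_negAddY, vc_addX, vc_negY, Affine.addY]

lemma vc_slope {x₁ x₂ y₁ y₂ : F} (h₁ : (C • W).toAffine.Equation x₁ y₁)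
    (h₂ : (C • W).toAffine.Equation x₂ y₂)
    (h : ¬(x₁ = x₂ ∧ y₁ = (C • W).toAffine.negY x₂ y₂)) :
    W.toAffine.slope (mx C x₁) (mx C x₂) (my C x₁ y₁) (my C x₂ y₂) =
      (C.u : F) * (C • W).toAffine.slope x₁ x₂ y₁ y₂ + C.s := by
  have hu : (C.u : F) ≠ 0 := C.u.ne_zero
  by_cases hx : x₁ = x₂
  · subst hx
    have hy : y₁ ≠ (C • W).toAffine.negY x₁ y₂ := fun hy => h ⟨rfl, hy⟩
    have hy2 : y₁ = y₂ := Affine.Y_eq_of_Y_ne h₁ h₂ rfl hy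
    subst hy2
    have hy' : my C x₁ y₁ ≠ W.toAffine.negY (mx C x₁) (my C x₁ y₁) := by
      rw [vc_negY]
      exact fun hh => hy (my_injective C hh)
    have hBne : my C x₁ y₁ - W.toAffine.negY (mx C x₁) (my C x₁ y₁) ≠ 0 := sub_ne_zero.mpr hy'
    have hB'ne : y₁ - (C • W).toAffine.negY x₁ y₁ ≠ 0 := sub_ne_zero.mpr hy
    rw [Affine.slope_of_Y_ne rfl hy', Affine.slope_of_Y_ne rfl hy, mul_div_assoc',
      div_add' _ _ _ hB'ne, div_eq_div_iff hBne hB'ne]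
    simp only [Affine.negY, variableChange_a₁, variableChange_a₂, variableChange_a₃,
      variableChange_a₄, mx, my, Units.val_inv_eq_inv_val]
    field_simp
    ring
  · have hx' : mx C x₁ ≠ mx C x₂ := fun hh => hx (mx_injective C hh)
    have hBne : mx C x₁ - mx C x₂ ≠ 0 := sub_ne_zero.mpr hx'
    have hB'ne : x₁ - x₂ ≠ 0 := sub_ne_zero.mpr hx
    rw [Affine.slope_of_X_ne hx', Affine.slope_of_X_ne hx, mul_div_assoc',
      div_add' _ _ _ hB'ne, div_eq_div_iff hBne hB'ne]
    simp only [mx, my]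
    ring

lemma some_congr {W : Affine F} {x₁ y₁ x₂ y₂ : F} {h₁ : W.Nonsingular x₁ y₁}
    {h₂ : W.Nonsingular x₂ y₂} (hx : x₁ = x₂) (hy : y₁ = y₂) :
    Point.some _ _ h₁ = Point.some _ _ h₂ := by
  subst hx; subst hy; rfl

variable {W C}

/-- The map on points induced by a variable change, from the changed curve to the original. -/
def vcFun : (C • W).toAffine.Point → W.toAffine.Point
  | 0 => 0
  | .some _ _ h => .some _ _ ((vc_nonsingular W C _ _).mp h)

/-- The group homomorphism on points induced by a variable change. -/
noncomputable def vcHom : (C • W).toAffine.Point →+ W.toAffine.Point where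
  toFun := vcFun
  map_zero' := rfl
  map_add' := by
    rintro (_ | @⟨x₁, y₁, h₁⟩) (_ | @⟨x₂, y₂, h₂⟩)
    any_goals rfl
    by_cases h : x₁ = x₂ ∧ y₁ = (C • W).toAffine.negY x₂ y₂
    · obtain ⟨rfl, hy⟩ := h
      rw [Point.add_of_Y_eq rfl hy]
      show (0 : W.toAffine.Point) = vcFun (.some _ _ h₁) + vcFun (.some _ _ h₂)
      rw [show vcFun (Point.some _ _ h₁) = Point.some _ _ ((vc_nonsingular W C _ _).mp h₁) from rfl,
        show vcFun (Point.some _ _ h₂) = Point.some _ _ ((vc_nonsingular W C _ _).mp h₂) from rfl,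
        Point.add_of_Y_eq rfl (by rw [vc_negY]; exact congrArg (my C x₁) hy)]
    · have hxy : x₁ = x₂ → y₁ ≠ (C • W).toAffine.negY x₂ y₂ :=
        fun hx hy => h ⟨hx, hy⟩
      have hxy' : mx C x₁ = mx C x₂ →
          my C x₁ y₁ ≠ W.toAffine.negY (mx C x₂) (my C x₂ y₂) := by
        intro hx hy
        have hx2 : x₁ = x₂ := mx_injective C hx
        subst hx2
        rw [vc_negY] at hy
        exact hxy rfl (my_injective C hy)
      rw [Point.add_some (fun h' => hxy h'.1 h'.2)]
      show vcFun (Point.some _ _ (Affine.nonsingular_add h₁ h₂ (fun h' => hxy h'.1 h'.2))) =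
        Point.some _ _ ((vc_nonsingular W C _ _).mp h₁) + Point.some _ _ ((vc_nonsingular W C _ _).mp h₂)
      rw [Point.add_some (fun h' => hxy' h'.1 h'.2)]
      exact some_congr
        (by rw [vc_slope W C h₁.1 h₂.1 h, vc_addX])
        (by rw [vc_slope W C h₁.1 h₂.1 h, vc_addY])

lemma vcHom_injective : Function.Injective (vcHom (W := W) (C := C)) := by
  rintro (_ | @⟨x₁, y₁, h₁⟩) (_ | @⟨x₂, y₂, h₂⟩) h
  · rfl
  · exact absurd h (by unfold vcHom; exact fun h' => Point.some_ne_zero _ h'.symm)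
  · exact absurd h (by unfold vcHom; exact fun h' => Point.some_ne_zero _ h')
  · unfold vcHom at h
    change vcFun (W := W) (C := C) (Point.some x₁ y₁ h₁) = vcFun (Point.some x₂ y₂ h₂) at h
    simp only [vcHom, AddMonoidHom.coe_mk, ZeroHom.coe_mk, vcFun, Point.some.injEq] at h
    exact some_congr (mx_injective C h.1) (by
      have hx := mx_injective C h.1
      subst hx
      exact my_injective C h.2)

lemma exists_point_of_vc {n : ℕ} (W : WeierstrassCurve F) (C : VariableChange F)
    (h : ∃ P : (C • W).toAffine.Point, addOrderOf P = n) :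
    ∃ P : W.toAffine.Point, addOrderOf P = n := by
  obtain ⟨P, hP⟩ := h
  exact ⟨vcHom P, by rw [addOrderOf_injective vcHom vcHom_injective P, hP]⟩

lemma exists_point_vc_iff {n : ℕ} (W : WeierstrassCurve F) (C : VariableChange F) :
    (∃ P : (C • W).toAffine.Point, addOrderOf P = n) ↔
      ∃ P : W.toAffine.Point, addOrderOf P = n := by
  refine ⟨exists_point_of_vc W C, fun h => ?_⟩
  have hW : C⁻¹ • (C • W) = W := by
    rw [smul_smul, inv_mul_cancel, one_smul]
  rw [← hW] at h
  exact exists_point_of_vc _ _ h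

/-! ### The curve `Y² + XY = X³ + (a² + a)⁸` and its point of order 8 -/

variable {K : Type*} [Field K] [CharP K 2]

/-- The standard curve with a point of order 8. -/
def W8 (a : K) : WeierstrassCurve K := ⟨1, 0, 0, 0, (a ^ 2 + a) ^ 8⟩

set_option linter.unusedSectionVars false in
@[simp] lemma W8_a₁ (a : K) : (W8 a).a₁ = 1 := rfl
set_option linter.unusedSectionVars false in
@[simp] lemma W8_a₂ (a : K) : (W8 a).a₂ = 0 := rfl
set_option linter.unusedSectionVars false in
@[simp] lemma W8_a₃ (a : K) : (W8 a).a₃ = 0 := rfl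
set_option linter.unusedSectionVars false in
@[simp] lemma W8_a₄ (a : K) : (W8 a).a₄ = 0 := rfl
set_option linter.unusedSectionVars false in
@[simp] lemma W8_a₆ (a : K) : (W8 a).a₆ = (a ^ 2 + a) ^ 8 := rfl

lemma two_eq_zero (K : Type*) [AddGroupWithOne K] [CharP K 2] : (2 : K) = 0 := CharP.cast_eq_zero K 2

lemma ne_one_iff {a : K} : a + 1 ≠ 0 ↔ a ≠ 1 := by
  constructor
  · intro h ha
    exact h (by rw [ha]; linear_combination two_eq_zero K)
  · intro h ha
    exact h (by linear_combination ha - (two_eq_zero K))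

lemma W8_Δ (a : K) : (W8 a).Δ = (a ^ 2 + a) ^ 8 := by
  simp only [WeierstrassCurve.Δ, WeierstrassCurve.b₂, WeierstrassCurve.b₄, WeierstrassCurve.b₆,
    WeierstrassCurve.b₈, W8_a₁, W8_a₂, W8_a₃, W8_a₄, W8_a₆]
  linear_combination (-216*a ^ 32 - 3456*a ^ 31 - 25920*a ^ 30 - 120960*a ^ 29 - 393120*a ^ 28 -
    943488*a ^ 27 - 1729728*a ^ 26 - 2471040*a ^ 25 - 2779920*a ^ 24 - 2471040*a ^ 23 -
    1729728*a ^ 22 - 943488*a ^ 21 - 393120*a ^ 20 - 120960*a ^ 19 - 25920*a ^ 18 - 3456*a ^ 17 -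
    217*a ^ 16 - 8*a ^ 15 - 28*a ^ 14 - 56*a ^ 13 - 70*a ^ 12 - 56*a ^ 11 - 28*a ^ 10 - 8*a ^ 9 -
    a ^ 8) * (two_eq_zero K)

variable {a : K}

lemma W8_Δ_ne_zero (ha0 : a ≠ 0) (ha1 : a ≠ 1) : (W8 a).Δ ≠ 0 := by
  rw [W8_Δ]
  refine pow_ne_zero 8 fun h => ?_
  have : a * (a + 1) = 0 := by linear_combination h
  rcases mul_eq_zero.mp this with h' | h'
  · exact ha0 h'
  · exact ne_one_iff.mpr ha1 h'

lemma W8_nsP (ha0 : a ≠ 0) (ha1 : a ≠ 1) : (W8 a).toAffine.Nonsingular (a ^ 4 + a ^ 3) (a ^ 8 + a ^ 5) := by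
  refine (Affine.equation_iff_nonsingular_of_Δ_ne_zero (W8_Δ_ne_zero ha0 ha1)).mp ?_
  rw [Affine.equation_iff]
  simp only [W8_a₁, W8_a₂, W8_a₃, W8_a₄, W8_a₆]
  linear_combination (-4*a ^ 15 - 14*a ^ 14 - 27*a ^ 13 - 35*a ^ 12 - 29*a ^ 11 - 15*a ^ 10 -
    4*a ^ 9) * (two_eq_zero K)

lemma W8_nsQ (ha0 : a ≠ 0) (ha1 : a ≠ 1) : (W8 a).toAffine.Nonsingular (a ^ 4 + a ^ 2) (a ^ 8 + a ^ 2) := by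
  refine (Affine.equation_iff_nonsingular_of_Δ_ne_zero (W8_Δ_ne_zero ha0 ha1)).mp ?_
  rw [Affine.equation_iff]
  simp only [W8_a₁, W8_a₂, W8_a₃, W8_a₄, W8_a₆]
  linear_combination (-4*a ^ 15 - 14*a ^ 14 - 28*a ^ 13 - 35*a ^ 12 - 28*a ^ 11 - 14*a ^ 10 -
    4*a ^ 9 - 2*a ^ 8 + a ^ 4) * (two_eq_zero K)

lemma W8_nsT (ha0 : a ≠ 0) (ha1 : a ≠ 1) : (W8 a).toAffine.Nonsingular 0 (a ^ 8 + a ^ 4) := by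
  refine (Affine.equation_iff_nonsingular_of_Δ_ne_zero (W8_Δ_ne_zero ha0 ha1)).mp ?_
  rw [Affine.equation_iff]
  simp only [W8_a₁, W8_a₂, W8_a₃, W8_a₄, W8_a₆]
  linear_combination (-4*a ^ 15 - 14*a ^ 14 - 28*a ^ 13 - 34*a ^ 12 - 28*a ^ 11 - 14*a ^ 10 -
    4*a ^ 9) * (two_eq_zero K)

lemma W8_x₁_ne (ha0 : a ≠ 0) (ha1 : a ≠ 1) : (a : K) ^ 4 + a ^ 3 ≠ 0 := by
  rw [show (a : K) ^ 4 + a ^ 3 = a ^ 3 * (a + 1) by ring]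
  exact mul_ne_zero (pow_ne_zero 3 ha0) (ne_one_iff.mpr ha1)

lemma W8_xQ_ne (ha0 : a ≠ 0) (ha1 : a ≠ 1) : (a : K) ^ 4 + a ^ 2 ≠ 0 := by
  rw [show (a : K) ^ 4 + a ^ 2 = a ^ 2 * (a + 1) ^ 2 by linear_combination (-(a ^ 3)) * two_eq_zero K]
  exact mul_ne_zero (pow_ne_zero 2 ha0) (pow_ne_zero 2 (ne_one_iff.mpr ha1))

lemma W8_hyP (ha0 : a ≠ 0) (ha1 : a ≠ 1) : (a : K) ^ 8 + a ^ 5 ≠ (W8 a).toAffine.negY (a ^ 4 + a ^ 3) (a ^ 8 + a ^ 5) := by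
  intro heq
  simp only [Affine.negY, W8_a₁, W8_a₃] at heq
  exact W8_x₁_ne ha0 ha1 (by linear_combination heq + (-(a ^ 8) - a ^ 5) * (two_eq_zero K))

lemma W8_hyQ (ha0 : a ≠ 0) (ha1 : a ≠ 1) : (a : K) ^ 8 + a ^ 2 ≠ (W8 a).toAffine.negY (a ^ 4 + a ^ 2) (a ^ 8 + a ^ 2) := by
  intro heq
  simp only [Affine.negY, W8_a₁, W8_a₃] at heq
  exact W8_xQ_ne ha0 ha1 (by linear_combination heq + (-(a ^ 8) - a ^ 2) * (two_eq_zero K))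

lemma W8_slopeP (ha0 : a ≠ 0) (ha1 : a ≠ 1) :
    (W8 a).toAffine.slope (a ^ 4 + a ^ 3) (a ^ 4 + a ^ 3) (a ^ 8 + a ^ 5) (a ^ 8 + a ^ 5)
      = a ^ 2 := by
  rw [Affine.slope_of_Y_ne rfl (W8_hyP ha0 ha1)]
  simp only [Affine.negY, W8_a₁, W8_a₂, W8_a₃, W8_a₄]
  rw [div_eq_iff (by
    intro h
    exact W8_x₁_ne ha0 ha1 (by linear_combination h + (-(a ^ 8) - a ^ 5) * (two_eq_zero K)))]
  linear_combination (-(a ^ 10) + a ^ 8 + 2*a ^ 7 + a ^ 6 - a ^ 5) * two_eq_zero K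

lemma W8_slopeQ (ha0 : a ≠ 0) (ha1 : a ≠ 1) :
    (W8 a).toAffine.slope (a ^ 4 + a ^ 2) (a ^ 4 + a ^ 2) (a ^ 8 + a ^ 2) (a ^ 8 + a ^ 2)
      = 1 := by
  rw [Affine.slope_of_Y_ne rfl (W8_hyQ ha0 ha1)]
  simp only [Affine.negY, W8_a₁, W8_a₂, W8_a₃, W8_a₄]
  rw [div_eq_iff (by
    intro h
    exact W8_xQ_ne ha0 ha1 (by linear_combination h + (-(a ^ 8) - a ^ 2) * (two_eq_zero K)))]
  linear_combination (3*a ^ 6 + a ^ 4 - 2*a ^ 2) * two_eq_zero K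

lemma W8_addXP (a : K) :
    (W8 a).toAffine.addX (a ^ 4 + a ^ 3) (a ^ 4 + a ^ 3) (a ^ 2) = a ^ 4 + a ^ 2 := by
  simp only [Affine.addX, W8_a₁, W8_a₂]
  linear_combination (-(a ^ 4) - a ^ 3) * two_eq_zero K

lemma W8_addYP (a : K) :
    (W8 a).toAffine.addY (a ^ 4 + a ^ 3) (a ^ 4 + a ^ 3) (a ^ 8 + a ^ 5) (a ^ 2)
      = a ^ 8 + a ^ 2 := by
  simp only [Affine.addY, Affine.negAddY, Affine.negY, Affine.addX, W8_a₁, W8_a₂, W8_a₃]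
  linear_combination (-(a ^ 8) + a ^ 6 + a ^ 5 + a ^ 3 - a ^ 2) * two_eq_zero K

lemma W8_addXQ (a : K) :
    (W8 a).toAffine.addX (a ^ 4 + a ^ 2) (a ^ 4 + a ^ 2) 1 = 0 := by
  simp only [Affine.addX, W8_a₁, W8_a₂]
  linear_combination (-(a ^ 4) - a ^ 2 + 1) * two_eq_zero K

lemma W8_addYQ (a : K) :
    (W8 a).toAffine.addY (a ^ 4 + a ^ 2) (a ^ 4 + a ^ 2) (a ^ 8 + a ^ 2) 1
      = a ^ 8 + a ^ 4 := by
  simp only [Affine.addY, Affine.negAddY, Affine.negY, Affine.addX, W8_a₁, W8_a₂, W8_a₃]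
  linear_combination (-(a ^ 8) + 2*a ^ 4 + 2*a ^ 2 - 2) * two_eq_zero K

lemma W8_exists {a : K} (ha0 : a ≠ 0) (ha1 : a ≠ 1) :
    ∃ P : (W8 a).toAffine.Point, addOrderOf P = 8 := by
  have hP := W8_nsP ha0 ha1
  have hQ := W8_nsQ ha0 ha1
  have hT := W8_nsT ha0 ha1
  have h2 : Point.some _ _ hP + Point.some _ _ hP = Point.some _ _ hQ := by
    rw [Point.add_self_of_Y_ne (W8_hyP ha0 ha1)]
    exact some_congr (by rw [W8_slopeP ha0 ha1]; exact W8_addXP a)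
      (by rw [W8_slopeP ha0 ha1]; exact W8_addYP a)
  have h4 : Point.some _ _ hQ + Point.some _ _ hQ = Point.some _ _ hT := by
    rw [Point.add_self_of_Y_ne (W8_hyQ ha0 ha1)]
    exact some_congr (by rw [W8_slopeQ ha0 ha1]; exact W8_addXQ a)
      (by rw [W8_slopeQ ha0 ha1]; exact W8_addYQ a)
  have h8 : Point.some _ _ hT + Point.some _ _ hT = 0 := by
    refine Point.add_self_of_Y_eq ?_
    simp only [Affine.negY, W8_a₁, W8_a₃]
    linear_combination (a ^ 8 + a ^ 4) * two_eq_zero K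
  refine ⟨Point.some _ _ hP, ?_⟩
  have e4 : (2 ^ 2 : ℕ) • Point.some _ _ hP = Point.some _ _ hT := by
    rw [show (2 ^ 2 : ℕ) = 2 * 2 from rfl, mul_nsmul, two_nsmul, two_nsmul, h2, h4]
  have e8 : (2 ^ 3 : ℕ) • Point.some _ _ hP = 0 := by
    rw [show (2 ^ 3 : ℕ) = 2 ^ 2 * 2 from rfl, mul_nsmul, e4, two_nsmul, h8]
  have := addOrderOf_eq_prime_pow (p := 2) (n := 2) (x := Point.some _ _ hP)
    (by rw [e4]; exact Point.some_ne_zero hT) e8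
  rw [this]; norm_num

/-! ### Forward direction -/

lemma nsmul_helpers {W : WeierstrassCurve K} (P : W.toAffine.Point)
    (hP : addOrderOf P = 8) :
    (2 : ℕ) • P ≠ 0 ∧ (4 : ℕ) • P ≠ 0 ∧ (8 : ℕ) • P = 0 := by
  refine ⟨fun h => ?_, fun h => ?_, ?_⟩
  · have := addOrderOf_dvd_of_nsmul_eq_zero h
    rw [hP] at this
    norm_num at this
  · have := addOrderOf_dvd_of_nsmul_eq_zero h
    rw [hP] at this
    norm_num at this
  · rw [← hP]
    exact addOrderOf_nsmul_eq_zero P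

lemma j_eq_zero_no8 (W : WeierstrassCurve K) [W.IsElliptic] [W.IsCharTwoJEqZeroNF]
    (hex : ∃ P : W.toAffine.Point, addOrderOf P = 8) : False := by
  obtain ⟨P, hP⟩ := hex
  obtain ⟨-, h4ne, h8⟩ := nsmul_helpers P hP
  have hTT : (4 : ℕ) • P + (4 : ℕ) • P = 0 := by
    rw [← two_nsmul, ← mul_nsmul, show (4 * 2 : ℕ) = 8 from rfl, h8]
  rcases hT4 : (4 : ℕ) • P with _ | @⟨xT, yT, hT⟩
  · rw [← Point.zero_def] at hT4
    exact h4ne hT4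
  · rw [hT4] at hTT
    by_cases hy : yT = W.toAffine.negY xT yT
    · have ha₃ : W.a₃ = 0 := by
        simp only [Affine.negY, a₁_of_isCharTwoJEqZeroNF] at hy
        linear_combination hy + (-yT) * two_eq_zero K
      have hΔ : W.Δ = 0 := by
        rw [Δ_of_isCharTwoJEqZeroNF_of_char_two, ha₃]
        ring
      exact W.isUnit_Δ.ne_zero hΔ
    · rw [Point.add_self_of_Y_ne hy] at hTT
      exact Point.some_ne_zero _ hTT

lemma main_step (W : WeierstrassCurve K) [W.IsElliptic] [W.IsCharTwoJNeZeroNF]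
    (hex : ∃ P : W.toAffine.Point, addOrderOf P = 8) :
    ∃ t : K, t ≠ 0 ∧ t ≠ 1 ∧ ∃ sc : K,
      (⟨1, 0, sc, 0⟩ : VariableChange K) • W = ⟨1, 0, 0, 0, (t / (t ^ 2 + 1)) ^ 8⟩ := by
  obtain ⟨P, hP⟩ := hex
  obtain ⟨h2ne, h4ne, h8⟩ := nsmul_helpers P hP
  have ha1 : W.a₁ = 1 := a₁_of_isCharTwoJNeZeroNF W
  have ha3 : W.a₃ = 0 := a₃_of_isCharTwoJNeZeroNF W
  have ha4 : W.a₄ = 0 := a₄_of_isCharTwoJNeZeroNF W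
  set A := W.a₂ with hA_def
  set B := W.a₆ with hB_def
  -- P is affine
  rcases hPdef : P with _ | @⟨x, y, h0⟩
  · rw [← Point.zero_def] at hPdef
    rw [hPdef, addOrderOf_zero] at hP
    norm_num at hP
  · subst hPdef
    -- basic equation
    have e1 : y ^ 2 + x * y = x ^ 3 + A * x ^ 2 + B := by
      have := (Affine.equation_iff _ _).mp h0.1
      rw [ha1, ha3, ha4] at this
      linear_combination this
    -- y ≠ negY
    have hy : y ≠ W.toAffine.negY x y := by
      intro heq
      exact h2ne (by rw [two_nsmul, Point.add_self_of_Y_eq heq])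
    have hx0 : x ≠ 0 := by
      intro hx
      apply hy
      simp only [Affine.negY, ha1, ha3]
      rw [hx]
      linear_combination y * two_eq_zero K
    -- doubling of P
    set lP := W.toAffine.slope x x y y with hlP_def
    set xQ := W.toAffine.addX x x lP with hxQ_def
    set yQ := W.toAffine.addY x x y lP with hyQ_def
    have hQns : W.toAffine.Nonsingular xQ yQ := Affine.nonsingular_add h0 h0 fun h' => hy h'.2
    have h2P : Point.some _ _ h0 + Point.some _ _ h0 = Point.some _ _ hQns := Point.add_self_of_Y_ne hy
    have e2 : yQ ^ 2 + xQ * yQ = xQ ^ 3 + A * xQ ^ 2 + B := by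
      have := (Affine.equation_iff _ _).mp hQns.1
      rw [ha1, ha3, ha4] at this
      linear_combination this
    have hden : y - W.toAffine.negY x y = x := by
      simp only [Affine.negY, ha1, ha3]
      linear_combination y * two_eq_zero K
    have hlPx : lP * x = x ^ 2 + y := by
      rw [hlP_def, Affine.slope_of_Y_ne rfl hy, hden, div_mul_cancel₀ _ hx0, ha1, ha4,
        ← hA_def]
      linear_combination (x ^ 2 + A * x - y) * two_eq_zero K
    have hxQ : xQ = lP ^ 2 + lP + A := by
      rw [hxQ_def]
      simp only [Affine.addX, ha1, ← hA_def]
      linear_combination (-A - x) * two_eq_zero K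
    have hyQ : yQ = lP * (xQ + x) + y + xQ := by
      rw [hyQ_def, hxQ_def]
      simp only [Affine.addY, Affine.negAddY, Affine.negY, Affine.addX, ha1, ha3, ← hA_def]
      linear_combination (-(lP * (lP ^ 2 + 1 * lP - A - x - x)) - y -
        (lP ^ 2 + 1 * lP - A - x - x)) * two_eq_zero K
    -- Q has order 4: doubling again
    have hyQne : yQ ≠ W.toAffine.negY xQ yQ := by
      intro heq
      apply h4ne
      rw [show (4 : ℕ) = 2 * 2 from rfl, mul_nsmul, two_nsmul, two_nsmul, h2P,
        Point.add_self_of_Y_eq heq]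
    have hxQ0 : xQ ≠ 0 := by
      intro hxq
      apply hyQne
      simp only [Affine.negY, ha1, ha3]
      rw [hxq]
      linear_combination yQ * two_eq_zero K
    set lQ := W.toAffine.slope xQ xQ yQ yQ with hlQ_def
    have hTns : W.toAffine.Nonsingular (W.toAffine.addX xQ xQ lQ)
        (W.toAffine.addY xQ xQ yQ lQ) := Affine.nonsingular_add hQns hQns fun h' => hyQne h'.2
    have h4P : (4 : ℕ) • Point.some _ _ h0 = Point.some _ _ hTns := by
      rw [show (4 : ℕ) = 2 * 2 from rfl, mul_nsmul, two_nsmul, two_nsmul, h2P,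
        Point.add_self_of_Y_ne hyQne]
    have hdenQ : yQ - W.toAffine.negY xQ yQ = xQ := by
      simp only [Affine.negY, ha1, ha3]
      linear_combination yQ * two_eq_zero K
    have hlQx : lQ * xQ = xQ ^ 2 + yQ := by
      rw [hlQ_def, Affine.slope_of_Y_ne rfl hyQne, hdenQ, div_mul_cancel₀ _ hxQ0, ha1, ha4,
        ← hA_def]
      linear_combination (xQ ^ 2 + A * xQ - yQ) * two_eq_zero K
    -- 8P = 0 gives x(4P) = 0
    have hTT : Point.some _ _ hTns + Point.some _ _ hTns = 0 := by
      rw [← h4P, ← two_nsmul, ← mul_nsmul, show (4 * 2 : ℕ) = 8 from rfl, h8]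
    have hyT : W.toAffine.addY xQ xQ yQ lQ =
        W.toAffine.negY (W.toAffine.addX xQ xQ lQ) (W.toAffine.addY xQ xQ yQ lQ) := by
      by_contra hne
      rw [Point.add_self_of_Y_ne hne] at hTT
      exact Point.some_ne_zero _ hTT
    have hxT : W.toAffine.addX xQ xQ lQ = 0 := by
      have h1 := hyT
      simp only [Affine.negY, ha1, ha3] at h1
      linear_combination h1 + (-(W.toAffine.addY xQ xQ yQ lQ)) * two_eq_zero K
    have hA : lQ ^ 2 + lQ + A = 0 := by
      have h1 := hxT
      simp only [Affine.addX, ha1, ← hA_def] at h1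
      linear_combination h1 + (A + xQ) * two_eq_zero K
    -- scalar algebra
    have g1 : xQ * x ^ 2 = x ^ 4 + B := by
      linear_combination x ^ 2 * hxQ + e1 + (lP * x + x ^ 2 + y + x) * hlPx +
        (x ^ 3 + x ^ 2 * y + x ^ 2 * A) * two_eq_zero K
    have g2 : B = xQ ^ 4 := by
      linear_combination (-(xQ ^ 2)) * hA - e2 - (lQ * xQ + xQ ^ 2 + yQ + xQ) * hlQx +
        (-(xQ ^ 4) - xQ ^ 3 - xQ ^ 2 * yQ + xQ ^ 2 * lQ ^ 2 + xQ ^ 2 * lQ) * two_eq_zero K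
    set v := lP + lQ with hv_def
    have gv : v ^ 2 + v = xQ := by
      rw [hv_def]
      linear_combination (-1 : K) * hxQ + hA + (lP * lQ - A) * two_eq_zero K
    have gdich : (x ^ 2 + xQ * v ^ 2) * (x ^ 2 + xQ * v ^ 2 + xQ) = 0 := by
      linear_combination (xQ ^ 2 * (v ^ 2 + v + xQ)) * gv + g1 + g2 +
        (x ^ 4 + x ^ 2 * xQ * v ^ 2 + xQ ^ 4 - xQ ^ 2 * v ^ 3) * two_eq_zero K
    -- extract v' with v'^2+v' = xQ, x^2 = xQ*v'^2, v' ≠ 0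
    obtain ⟨w, hw1, hw2, hw0⟩ : ∃ w : K, w ^ 2 + w = xQ ∧ x ^ 2 = xQ * w ^ 2 ∧ w ≠ 0 := by
      rcases mul_eq_zero.mp gdich with hc | hc
      · refine ⟨v, gv, by linear_combination hc + (-(xQ * v ^ 2)) * two_eq_zero K, fun hv0 => ?_⟩
        apply hxQ0
        rw [← gv, hv0]
        ring
      · refine ⟨v + 1, by linear_combination gv + (v + 1) * two_eq_zero K,
          by linear_combination (-1 : K) * hc + (x ^ 2 - xQ * v) * two_eq_zero K, fun hv1 => ?_⟩
        apply hxQ0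
        rw [← gv]
        linear_combination v * hv1
    -- square root
    set ρ := x / w + w with hρ_def
    have hρ : ρ ^ 2 = w := by
      rw [hρ_def, div_add' _ _ _ hw0, div_pow, div_eq_iff (pow_ne_zero 2 hw0)]
      linear_combination hw2 + (-(w ^ 2)) * hw1 + (x * w ^ 2 + w ^ 4) * two_eq_zero K
    have hρ0 : ρ ≠ 0 := by
      intro h
      apply hw0
      rw [← hρ, h]
      ring
    have hρ1 : ρ + 1 ≠ 0 := by
      intro h
      apply hxQ0
      have hρval : ρ = 1 := by linear_combination h - two_eq_zero K
      have hw1' : w = 1 := by rw [← hρ, hρval]; ring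
      rw [← hw1, hw1']
      linear_combination two_eq_zero K
    set t := ρ / (ρ + 1) with ht_def
    have ht0 : t ≠ 0 := div_ne_zero hρ0 hρ1
    have htp1 : t + 1 = 1 / (ρ + 1) := by
      rw [ht_def, div_add' _ _ _ hρ1]
      congr 1
      linear_combination ρ * two_eq_zero K
    have ht1ne : t + 1 ≠ 0 := by
      rw [htp1]
      exact one_div_ne_zero hρ1
    have ht1 : t ≠ 1 := by
      intro h
      apply ht1ne
      rw [h]
      linear_combination two_eq_zero K
    have ht2 : t ^ 2 + 1 = (t + 1) ^ 2 := by
      linear_combination (-t) * two_eq_zero K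
    have hd : t / (t ^ 2 + 1) = ρ ^ 2 + ρ := by
      rw [ht2, htp1, div_pow, one_pow, one_div, div_eq_mul_inv, inv_inv, ht_def, div_mul_eq_mul_div,
        div_eq_iff hρ1]
      ring
    have hB8 : B = (ρ ^ 2 + ρ) ^ 8 := by
      linear_combination g2 - ((ρ ^ 2 + ρ) ^ 6 + (ρ ^ 2 + ρ) ^ 4 * xQ + (ρ ^ 2 + ρ) ^ 2 * xQ ^ 2
          + xQ ^ 3) * ((ρ ^ 2 + w + 1) * hρ + hw1) -
        (((ρ ^ 2 + ρ) ^ 6 + (ρ ^ 2 + ρ) ^ 4 * xQ + (ρ ^ 2 + ρ) ^ 2 * xQ ^ 2 + xQ ^ 3) * ρ ^ 3) *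
          two_eq_zero K
    refine ⟨t, ht0, ht1, lQ, ?_⟩
    have hB' : (t / (t ^ 2 + 1)) ^ 8 = B := by rw [hd, ← hB8]
    ext
    · simp only [variableChange_a₁, ha1, inv_one, Units.val_one, one_mul]
      linear_combination lQ * two_eq_zero K
    · simp only [variableChange_a₂, ha1, inv_one, Units.val_one, one_pow, one_mul]
      rw [← hA_def]
      linear_combination hA + (-lQ - lQ ^ 2) * two_eq_zero K
    · simp only [variableChange_a₃, ha1, ha3, inv_one, Units.val_one, one_pow, one_mul]
      ring
    · simp only [variableChange_a₄, ha1, ha3, ha4, inv_one, Units.val_one, one_pow, one_mul]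
      ring
    · simp only [variableChange_a₆, ha1, ha3, ha4, inv_one, Units.val_one, one_pow, one_mul]
      rw [← hB_def, hB']
      ring

end OrderEightAux

open scoped Classical in
/-- over a field of characteristic 2, an elliptic curve has a `K`-rational
point of order 8 if and only if it is `K`-isomorphic to
`E_{8,t} : y² + xy = x³ + (t/(t² + 1))⁸` for some `t ∈ K \ {0, 1}`. -/
theorem order_eight_char_two {K : Type*} [Field K] [CharP K 2]
    (E : WeierstrassCurve K) [E.IsElliptic] :
    (∃ P : E.toAffine.Point, addOrderOf P = 8) ↔
    ∃ t : K, t ≠ 0 ∧ t ≠ 1 ∧ ∃ C : VariableChange K,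
      C • E = ⟨1, 0, 0, 0, (t / (t ^ 2 + 1)) ^ 8⟩ := by
  classical
  constructor
  · intro hex
    have hex₀ : ∃ P : (E.toCharTwoNF • E).toAffine.Point, addOrderOf P = 8 :=
      (OrderEightAux.exists_point_vc_iff E E.toCharTwoNF).mpr hex
    rcases (WeierstrassCurve.toCharTwoNF_spec (W := E)) with _ | _
    · obtain ⟨t, ht0, ht1, sc, hsc⟩ :=
        OrderEightAux.main_step (E.toCharTwoNF • E) hex₀
      exact ⟨t, ht0, ht1, (⟨1, 0, sc, 0⟩ : VariableChange K) * E.toCharTwoNF,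
        by rw [mul_smul]; exact hsc⟩
    · exact (OrderEightAux.j_eq_zero_no8 (E.toCharTwoNF • E) hex₀).elim
  · rintro ⟨t, ht0, ht1, C, hC⟩
    have htwo : (2 : K) = 0 := OrderEightAux.two_eq_zero K
    have ht1ne : t + 1 ≠ 0 := OrderEightAux.ne_one_iff.mpr ht1
    set a := t / (t + 1) with ha_def
    have ha0 : a ≠ 0 := div_ne_zero ht0 ht1ne
    have ha1 : a ≠ 1 := by
      intro h
      rw [ha_def, div_eq_one_iff_eq ht1ne] at h
      exact one_ne_zero (α := K) (by linear_combination -h)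
    have ht2ne : t ^ 2 + 1 ≠ 0 := by
      rw [show t ^ 2 + 1 = (t + 1) ^ 2 by linear_combination (-t) * htwo]
      exact pow_ne_zero 2 ht1ne
    have key : t / (t ^ 2 + 1) = a ^ 2 + a := by
      rw [ha_def, div_pow, div_add_div _ _ (pow_ne_zero 2 ht1ne) ht1ne,
        div_eq_div_iff ht2ne (mul_ne_zero (pow_ne_zero 2 ht1ne) ht1ne)]
      linear_combination (-(t ^ 5) - t ^ 4) * htwo
    have hC' : C • E = OrderEightAux.W8 a := by
      rw [hC]
      unfold OrderEightAux.W8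
      rw [key]
    refine (OrderEightAux.exists_point_vc_iff E C).mp ?_
    rw [hC']
    exact OrderEightAux.W8_exists ha0 ha1
end
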